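/- Let A be a bounded self-adjoint operator, x an eigenvector with eigenvalue λ = ρ(x), and y a nonzero vector with ∠{x,y} > 0. Then |λ − ρ(y)| ≤ (Σ_max(A) − Σ_min(A))·sin²(∠{x,y}), where Σ_max(A) and Σ_min(A) are the largest and smallest points of the spectrum of A. -/

import Mathlib

open scoped RealInnerProductSpace
open Submodule

noncomputable section

variable {H : Type*} [NormedAddCommGroup H] [InnerProductSpace ℝ H]

/-- The Rayleigh quotient of `x` with respect to `A`. -/
def rq (A : H →L[ℝ] H) (x : H) : ℝ := ⟪x, A x⟫ / ⟪x, x⟫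

/-- The residual of `x` with respect to `A`. -/
def res (A : H →L[ℝ] H) (x : H) : H := A x - rq A x • x

/-- The acute angle between two vectors. -/
def ang (x y : H) : ℝ := Real.arccos (|⟪x, y⟫| / (‖x‖ * ‖y‖))

namespace Stmt15Aux

/-- The set of Rayleigh-quotient values on the unit sphere. -/
def S (A : H →L[ℝ] H) : Set ℝ := (fun u => ⟪u, A u⟫) '' Metric.sphere (0 : H) 1

lemma unit_mem_sphere {v : H} (hv : v ≠ 0) : (‖v‖⁻¹ • v) ∈ Metric.sphere (0 : H) 1 := by
  have hv' : ‖v‖ ≠ 0 := norm_ne_zero_iff.mpr hv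
  simp [norm_smul, abs_of_nonneg (norm_nonneg v), inv_mul_cancel₀ hv']

lemma rq_mem_S (A : H →L[ℝ] H) {v : H} (hv : v ≠ 0) : rq A v ∈ S A := by
  have hv' : ‖v‖ ≠ 0 := norm_ne_zero_iff.mpr hv
  refine ⟨‖v‖⁻¹ • v, unit_mem_sphere hv, ?_⟩
  have h : ⟪v, v⟫ = ‖v‖ ^ 2 := real_inner_self_eq_norm_sq v
  have h2 : ⟪‖v‖⁻¹ • v, A (‖v‖⁻¹ • v)⟫ = ‖v‖⁻¹ * (‖v‖⁻¹ * ⟪v, A v⟫) := by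
    rw [map_smul, inner_smul_left, inner_smul_right]
    norm_num
  show ⟪‖v‖⁻¹ • v, A (‖v‖⁻¹ • v)⟫ = rq A v
  rw [h2, rq, h]
  field_simp

lemma S_nonempty (A : H →L[ℝ] H) {v : H} (hv : v ≠ 0) : (S A).Nonempty :=
  ⟨rq A v, rq_mem_S A hv⟩

lemma S_bddAbove (A : H →L[ℝ] H) : BddAbove (S A) := by
  refine ⟨‖A‖, ?_⟩
  rintro s ⟨u, hu, rfl⟩
  rw [mem_sphere_zero_iff_norm] at hu
  calc ⟪u, A u⟫ ≤ ‖u‖ * ‖A u‖ := real_inner_le_norm _ _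
    _ ≤ ‖u‖ * (‖A‖ * ‖u‖) := by
        have := A.le_opNorm u
        exact mul_le_mul_of_nonneg_left this (norm_nonneg u)
    _ = ‖A‖ := by rw [hu]; ring

lemma sSup_S_mem_spectrum [CompleteSpace H] (A : H →L[ℝ] H) (hA : IsSelfAdjoint A)
    {x₀ : H} (hx₀ : x₀ ≠ 0) : sSup (S A) ∈ spectrum ℝ A := by
  set t := sSup (S A) with ht
  have hSne := S_nonempty A hx₀
  have hSbdd := S_bddAbove A
  rw [spectrum.mem_iff]
  intro hunit
  set B : H →L[ℝ] H := algebraMap ℝ (H →L[ℝ] H) t - A with hBdef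
  have hBapp : ∀ z : H, B z = t • z - A z := by
    intro z
    simp [hBdef, Algebra.algebraMap_eq_smul_one]
  have hBsym : ∀ a b : H, ⟪B a, b⟫ = ⟪a, B b⟫ := by
    intro a b
    have hAsym := hA.isSymmetric a b
    simp only [ContinuousLinearMap.coe_coe] at hAsym
    simp only [hBapp, inner_sub_left, inner_sub_right, inner_smul_left, inner_smul_right,
      RCLike.conj_to_real]
    rw [hAsym]
  -- positivity of B
  have hBpos : ∀ z : H, 0 ≤ ⟪z, B z⟫ := by
    intro z
    rcases eq_or_ne z 0 with rfl | hz
    · simp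
    · have hz' : ‖z‖ ≠ 0 := norm_ne_zero_iff.mpr hz
      have h1 : rq A z ∈ S A := rq_mem_S A hz
      have h2 : rq A z ≤ t := le_csSup hSbdd h1
      have hzz : ⟪z, z⟫ = ‖z‖ ^ 2 := real_inner_self_eq_norm_sq z
      have hzz' : (0:ℝ) < ⟪z, z⟫ := by rw [hzz]; positivity
      have h3 : ⟪z, A z⟫ ≤ t * ⟪z, z⟫ := by
        have := (div_le_iff₀ hzz').mp h2
        simpa [rq] using this
      have : ⟪z, B z⟫ = t * ⟪z, z⟫ - ⟪z, A z⟫ := by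
        rw [hBapp]; simp [inner_sub_right, inner_smul_right]
      linarith
  -- Cauchy–Schwarz for the positive operator B
  have hCS : ∀ z : H, ‖B z‖ ^ 2 ≤ ‖B‖ * ⟪z, B z⟫ := by
    intro z
    set v := B z with hv
    rcases eq_or_ne v 0 with hv0 | hv0
    · rw [hv0]
      simpa using mul_nonneg (norm_nonneg B) (hBpos z)
    · have hq : ∀ s : ℝ, 0 ≤ ⟪v, B v⟫ * (s * s) + (2 * ‖v‖ ^ 2) * s + ⟪z, B z⟫ := by
        intro s
        have h0 := hBpos (z + s • v)
        have hexp : ⟪z + s • v, B (z + s • v)⟫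
            = ⟪v, B v⟫ * (s * s) + (2 * ‖v‖ ^ 2) * s + ⟪z, B z⟫ := by
          have h1 : ⟪z, B v⟫ = ‖v‖ ^ 2 := by
            rw [← hBsym z v, hv, real_inner_self_eq_norm_sq]
          have h2 : ⟪v, B z⟫ = ‖v‖ ^ 2 := by
            rw [← hv, real_inner_self_eq_norm_sq]
          simp only [map_add, map_smul, inner_add_left, inner_add_right, inner_smul_left,
            inner_smul_right, RCLike.conj_to_real, h1, h2]
          ring
        rw [← hexp]; exact h0
      have hd := discrim_le_zero hq
      rw [discrim] at hd
      have hvB : ⟪v, B v⟫ ≤ ‖B‖ * ‖v‖ ^ 2 := by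
        calc ⟪v, B v⟫ ≤ ‖v‖ * ‖B v‖ := real_inner_le_norm _ _
          _ ≤ ‖v‖ * (‖B‖ * ‖v‖) := mul_le_mul_of_nonneg_left (B.le_opNorm v) (norm_nonneg v)
          _ = ‖B‖ * ‖v‖ ^ 2 := by ring
      have hvpos : (0:ℝ) < ‖v‖ := norm_pos_iff.mpr hv0
      have hzB := hBpos z
      nlinarith [mul_le_mul_of_nonneg_right hvB hzB, mul_pos hvpos hvpos,
        sq_nonneg (‖v‖ ^ 2)]
  -- inverse bound
  obtain ⟨u, hu⟩ := hunit
  set C : H →L[ℝ] H := (↑u⁻¹ : H →L[ℝ] H) with hC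
  have hinv : ∀ z : H, ‖z‖ ≤ ‖C‖ * ‖B z‖ := by
    intro z
    have h1 : C (B z) = z := by
      have : (C * (↑u : H →L[ℝ] H)) z = z := by rw [u.inv_mul]; rfl
      rwa [hu] at this
    calc ‖z‖ = ‖C (B z)‖ := by rw [h1]
      _ ≤ ‖C‖ * ‖B z‖ := C.le_opNorm _
  -- get contradiction
  set u₀ : H := ‖x₀‖⁻¹ • x₀ with hu₀def
  have hu₀ : ‖u₀‖ = 1 := by
    have := unit_mem_sphere hx₀
    rwa [mem_sphere_zero_iff_norm] at this
  have h10 : (1:ℝ) ≤ ‖C‖ * ‖B u₀‖ := by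
    have := hinv u₀; rwa [hu₀] at this
  have hBn : (0:ℝ) < ‖B‖ := by
    rcases (norm_nonneg B).lt_or_eq with h | h
    · exact h
    · exfalso
      have hB0 : B = 0 := by rwa [eq_comm, norm_eq_zero] at h
      have hz : ‖B u₀‖ = 0 := by rw [hB0]; simp
      rw [hz, mul_zero] at h10
      linarith
  have hCn : (0:ℝ) < ‖C‖ := by
    by_contra h
    push_neg at h
    have : ‖C‖ = 0 := le_antisymm h (norm_nonneg C)
    rw [this] at h10
    linarith
  set δ : ℝ := 1 / (‖C‖ ^ 2 * ‖B‖) with hδ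
  have hδpos : 0 < δ := by positivity
  have hub : ∀ s ∈ S A, s ≤ t - δ := by
    rintro s ⟨w, hw, rfl⟩
    rw [mem_sphere_zero_iff_norm] at hw
    have h1 : (1:ℝ) ≤ ‖C‖ * ‖B w‖ := by
      have := hinv w; rwa [hw] at this
    have h2 : ‖B w‖ ^ 2 ≤ ‖B‖ * ⟪w, B w⟫ := hCS w
    have h3 : ⟪w, B w⟫ = t - ⟪w, A w⟫ := by
      rw [hBapp]
      have : ⟪w, w⟫ = 1 := by rw [real_inner_self_eq_norm_sq, hw]; norm_num
      simp [inner_sub_right, inner_smul_right, this, hw]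
    have h4 : (1:ℝ) ≤ ‖C‖ ^ 2 * ‖B w‖ ^ 2 := by nlinarith [norm_nonneg (B w)]
    have h5 : (1:ℝ) ≤ ‖C‖ ^ 2 * (‖B‖ * (t - ⟪w, A w⟫)) := by
      calc (1:ℝ) ≤ ‖C‖ ^ 2 * ‖B w‖ ^ 2 := h4
        _ ≤ ‖C‖ ^ 2 * (‖B‖ * ⟪w, B w⟫) := by
            exact mul_le_mul_of_nonneg_left h2 (by positivity)
        _ = ‖C‖ ^ 2 * (‖B‖ * (t - ⟪w, A w⟫)) := by rw [h3]
    have hK : (0:ℝ) < ‖C‖ ^ 2 * ‖B‖ := by positivity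
    have h6 : 1 / (‖C‖ ^ 2 * ‖B‖) ≤ t - ⟪w, A w⟫ := by
      rw [div_le_iff₀ hK]
      nlinarith
    show ⟪w, A w⟫ ≤ t - δ
    rw [hδ]
    linarith
  have : t ≤ t - δ := csSup_le hSne hub
  linarith

lemma rq_le_sSup_spectrum [CompleteSpace H] (A : H →L[ℝ] H) (hA : IsSelfAdjoint A)
    {v : H} (hv : v ≠ 0) : rq A v ≤ sSup (spectrum ℝ A) := by
  haveI : Nontrivial H := ⟨⟨v, 0, hv⟩⟩
  have h1 : rq A v ≤ sSup (S A) := le_csSup (S_bddAbove A) (rq_mem_S A hv)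
  have h2 : sSup (S A) ∈ spectrum ℝ A := sSup_S_mem_spectrum A hA hv
  have h3 : BddAbove (spectrum ℝ A) :=
    ((Metric.isBounded_closedBall (x := (0:ℝ)) (r := ‖A‖)).subset
      (spectrum.subset_closedBall_norm A)).bddAbove
  exact h1.trans (le_csSup h3 h2)

lemma sInf_spectrum_le_rq [CompleteSpace H] (A : H →L[ℝ] H) (hA : IsSelfAdjoint A)
    {v : H} (hv : v ≠ 0) : sInf (spectrum ℝ A) ≤ rq A v := by
  have hneg : rq (-A) v ≤ sSup (spectrum ℝ (-A)) := rq_le_sSup_spectrum (-A) hA.neg hv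
  have h1 : rq (-A) v = - rq A v := by
    simp [rq, inner_neg_right, neg_div]
  have h2 : spectrum ℝ (-A) = -spectrum ℝ A := (spectrum.neg_eq A).symm
  have h3 : sSup (-(spectrum ℝ A)) = -sInf (spectrum ℝ A) := by
    rw [Real.sInf_def]; ring
  rw [h1, h2, h3] at hneg
  linarith

lemma rq_eig (A : H →L[ℝ] H) {lam : ℝ} {x : H} (hx : x ≠ 0) (heig : A x = lam • x) :
    rq A x = lam := by
  have hxx : ⟪x, x⟫ ≠ 0 := by
    rw [real_inner_self_eq_norm_sq]
    have h : ‖x‖ ≠ 0 := norm_ne_zero_iff.mpr hx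
    positivity
  rw [rq, heig, inner_smul_right, mul_div_assoc, div_self hxx, mul_one]

end Stmt15Aux

open Stmt15Aux in
/-- A priori bound: if `x` is an eigenvector of `A` with eigenvalue `λ = ρ(x)` and `y ≠ 0`
with `∠{x,y} > 0`, then `|λ − ρ(y)| ≤ (Σ_max(A) − Σ_min(A))·sin²∠{x,y}`, where `Σ_max(A)`
and `Σ_min(A)` are the largest and smallest points of the spectrum of `A`. -/
theorem stmt_15 [CompleteSpace H] (A : H →L[ℝ] H) (hA : IsSelfAdjoint A)
    (lam : ℝ) (x : H) (hx : x ≠ 0) (heig : A x = lam • x)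
    (y : H) (hy : y ≠ 0) (hang : 0 < ang x y) :
    |lam - rq A y|
      ≤ (sSup (spectrum ℝ A) - sInf (spectrum ℝ A)) * Real.sin (ang x y) ^ 2 := by
  set M := sSup (spectrum ℝ A) with hM
  set m := sInf (spectrum ℝ A) with hm
  have hlam : rq A x = lam := rq_eig A hx heig
  have hlamM : lam ≤ M := hlam ▸ rq_le_sSup_spectrum A hA hx
  have hlamm : m ≤ lam := hlam ▸ sInf_spectrum_le_rq A hA hx
  have hxx : (0:ℝ) < ⟪x, x⟫ := by
    rw [real_inner_self_eq_norm_sq]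
    have : ‖x‖ ≠ 0 := norm_ne_zero_iff.mpr hx
    positivity
  have hyy : (0:ℝ) < ⟪y, y⟫ := by
    rw [real_inner_self_eq_norm_sq]
    have : ‖y‖ ≠ 0 := norm_ne_zero_iff.mpr hy
    positivity
  set a : ℝ := ⟪x, y⟫ / ⟪x, x⟫ with ha
  set w : H := y - a • x with hw
  have hxw : ⟪x, w⟫ = 0 := by
    rw [hw]
    simp only [inner_sub_right, inner_smul_right, ha]
    field_simp
    ring
  have hwx : ⟪w, x⟫ = 0 := by rw [real_inner_comm]; exact hxw
  have hAsym := hA.isSymmetric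
  have hwAx : ⟪w, A x⟫ = 0 := by rw [heig, inner_smul_right, hwx, mul_zero]
  have hxAw : ⟪x, A w⟫ = 0 := by
    have h := hAsym x w
    simp only [ContinuousLinearMap.coe_coe] at h
    rw [← h, real_inner_comm, hwAx]
  have hy_eq : y = a • x + w := by rw [hw]; abel
  -- key identities
  have hyy_eq : ⟪y, y⟫ = a ^ 2 * ⟪x, x⟫ + ⟪w, w⟫ := by
    rw [hy_eq]
    simp only [inner_add_left, inner_add_right, inner_smul_left, inner_smul_right,
      RCLike.conj_to_real, hxw, hwx]
    ring
  have hxAx : ⟪x, A x⟫ = lam * ⟪x, x⟫ := by rw [heig, inner_smul_right]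
  have hyAy : ⟪y, A y⟫ = a ^ 2 * lam * ⟪x, x⟫ + ⟪w, A w⟫ := by
    rw [hy_eq]
    simp only [map_add, map_smul, inner_add_left, inner_add_right, inner_smul_left,
      inner_smul_right, RCLike.conj_to_real, hxAw, hwAx, hxAx]
    ring
  have hyy' : ⟪y, y⟫ ≠ 0 := ne_of_gt hyy
  have hkey : lam - rq A y = (lam * ⟪w, w⟫ - ⟪w, A w⟫) / ⟪y, y⟫ := by
    rw [rq, eq_div_iff hyy', sub_mul, div_mul_cancel₀ _ hyy', hyAy, hyy_eq]
    ring
  -- sin² of the angle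
  have hcs : |⟪x, y⟫| ≤ ‖x‖ * ‖y‖ := abs_real_inner_le_norm x y
  have hnx : (0:ℝ) < ‖x‖ := norm_pos_iff.mpr hx
  have hny : (0:ℝ) < ‖y‖ := norm_pos_iff.mpr hy
  have ht1 : |⟪x, y⟫| / (‖x‖ * ‖y‖) ≤ 1 := by
    rw [div_le_one (by positivity)]; exact hcs
  have ht0 : 0 ≤ |⟪x, y⟫| / (‖x‖ * ‖y‖) := by positivity
  have hsin : Real.sin (ang x y) ^ 2 = ⟪w, w⟫ / ⟪y, y⟫ := by
    rw [ang, Real.sin_arccos, Real.sq_sqrt (by nlinarith : (0:ℝ) ≤ 1 - (|⟪x, y⟫| / (‖x‖ * ‖y‖)) ^ 2)]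
    have h1 : (|⟪x, y⟫| / (‖x‖ * ‖y‖)) ^ 2 = ⟪x, y⟫ ^ 2 / (⟪x, x⟫ * ⟪y, y⟫) := by
      rw [div_pow, mul_pow, sq_abs, real_inner_self_eq_norm_sq, real_inner_self_eq_norm_sq]
    rw [h1]
    have hww : ⟪w, w⟫ = ⟪y, y⟫ - ⟪x, y⟫ ^ 2 / ⟪x, x⟫ := by
      rw [hw]
      simp only [inner_sub_left, inner_sub_right, inner_smul_left, inner_smul_right,
        RCLike.conj_to_real, ha]
      rw [real_inner_comm y x]
      field_simp
      ring
    rw [hww]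
    field_simp
  have hww_nonneg : (0:ℝ) ≤ ⟪w, w⟫ := real_inner_self_nonneg
  rcases eq_or_ne w 0 with hw0 | hw0
  · -- w = 0 : lam = rq A y
    have h0 : lam - rq A y = 0 := by
      rw [hkey, hw0]
      simp
    rw [h0, abs_zero]
    have : (0:ℝ) ≤ Real.sin (ang x y) ^ 2 := sq_nonneg _
    have hMm : (0:ℝ) ≤ M - m := by linarith
    positivity
  · have hww_pos : (0:ℝ) < ⟪w, w⟫ := by
      rw [real_inner_self_eq_norm_sq]
      have : ‖w‖ ≠ 0 := norm_ne_zero_iff.mpr hw0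
      positivity
    have hwM : rq A w ≤ M := rq_le_sSup_spectrum A hA hw0
    have hwm : m ≤ rq A w := sInf_spectrum_le_rq A hA hw0
    have hfact : lam * ⟪w, w⟫ - ⟪w, A w⟫ = (lam - rq A w) * ⟪w, w⟫ := by
      rw [rq]
      field_simp
    have habs : |lam - rq A y| = |lam - rq A w| * (⟪w, w⟫ / ⟪y, y⟫) := by
      rw [hkey, hfact, abs_div, abs_mul, abs_of_pos hyy, abs_of_pos hww_pos, mul_div_assoc]
    rw [habs, hsin]
    have hb : |lam - rq A w| ≤ M - m := by
      rw [abs_sub_le_iff]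
      constructor <;> linarith
    exact mul_le_mul_of_nonneg_right hb (by positivity)
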